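/- Let H ∈ ℝ^{m×n} be the incidence matrix of an oriented graph and H̄ = H ⊗ I_d. Let p, p* ∈ ℝ^{dn} be two configurations with all edge vectors e_k = (H̄p)_k and e_k* = (H̄p*)_k nonzero, with bearings g_k = e_k/‖e_k‖ and g_k* = e_k*/‖e_k*‖, and bearing Laplacians L_B(p) and L_B(p*). Set p̃ = p − p* and γ' = min_{k=1,…,m} ‖e_k*‖²/‖e_k‖². Then p̃ᵀ L_B(p) p̃ = Σ_{k=1}^m (‖e_k*‖²/‖e_k‖²) (e_k − e_k*)ᵀ π_{g_k*} (e_k − e_k*) ≥ γ' · p̃ᵀ L_B(p*) p̃. -/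

import Mathlib

open MeasureTheory Matrix
open scoped Kronecker

/-- The projection operator `π_y = I_d - y yᵀ`. -/
noncomputable def proj {d : ℕ} (y : Fin d → ℝ) : Matrix (Fin d) (Fin d) ℝ :=
  1 - Matrix.vecMulVec y y

/-- `H` is the incidence matrix of an oriented graph. -/
def IsIncidence {m n : ℕ} (H : Matrix (Fin m) (Fin n) ℝ) : Prop :=
  ∃ head tail : Fin m → Fin n, (∀ k, head k ≠ tail k) ∧
    ∀ k i, H k i = if i = head k then 1 else if i = tail k then -1 else 0

/-- `H̄ = H ⊗ I_d`. -/
noncomputable def Hbar {m n : ℕ} (d : ℕ) (H : Matrix (Fin m) (Fin n) ℝ) :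
    Matrix (Fin m × Fin d) (Fin n × Fin d) ℝ :=
  H ⊗ₖ (1 : Matrix (Fin d) (Fin d) ℝ)

/-- `Π = blkdiag(π_{g_1}, …, π_{g_m})`. -/
noncomputable def blkProj {m d : ℕ} (g : Fin m → Fin d → ℝ) :
    Matrix (Fin m × Fin d) (Fin m × Fin d) ℝ :=
  Matrix.of fun p q => if p.1 = q.1 then proj (g p.1) p.2 q.2 else 0

/-- Euclidean norm of a vector in `ℝ^d` given as `Fin d → ℝ`. -/
noncomputable def enorm₂ {d : ℕ} (v : Fin d → ℝ) : ℝ := Real.sqrt (v ⬝ᵥ v)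

/-- The bearing (unit vector) of a nonzero vector. -/
noncomputable def bearingOf {d : ℕ} (v : Fin d → ℝ) : Fin d → ℝ := (enorm₂ v)⁻¹ • v

/-- The `k`-th edge vector `e_k = (H̄ p)_k ∈ ℝ^d` of a configuration `p`. -/
noncomputable def edgeVec {m n d : ℕ} (H : Matrix (Fin m) (Fin n) ℝ)
    (p : Fin n × Fin d → ℝ) (k : Fin m) : Fin d → ℝ :=
  fun i => (Hbar d H).mulVec p (k, i)

/-- The bearing Laplacian `L_B = H̄ᵀ Π H̄` of a configuration `p`. -/
noncomputable def LB {m n : ℕ} {d : ℕ} (H : Matrix (Fin m) (Fin n) ℝ)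
    (p : Fin n × Fin d → ℝ) : Matrix (Fin n × Fin d) (Fin n × Fin d) ℝ :=
  (Hbar d H)ᵀ * blkProj (fun k => bearingOf (edgeVec H p k)) * Hbar d H

/-- `U = 1_n ⊗ I_d`. -/
noncomputable def Umat (n d : ℕ) : Matrix (Fin n × Fin d) (Fin d) ℝ :=
  Matrix.of fun p j => if p.2 = j then 1 else 0



namespace Statement13Aux

lemma dot_self_nonneg {d : ℕ} (v : Fin d → ℝ) : 0 ≤ v ⬝ᵥ v :=
  Finset.sum_nonneg fun i _ => mul_self_nonneg _

lemma dot_self_pos {d : ℕ} {v : Fin d → ℝ} (h : v ≠ 0) : 0 < v ⬝ᵥ v :=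
  lt_of_le_of_ne (dot_self_nonneg v) fun h' => h (dotProduct_self_eq_zero.mp h'.symm)

lemma enorm_sq {d : ℕ} (v : Fin d → ℝ) : enorm₂ v ^ 2 = v ⬝ᵥ v :=
  Real.sq_sqrt (dot_self_nonneg v)

lemma bearing_dot {d : ℕ} (v w : Fin d → ℝ) :
    bearingOf v ⬝ᵥ w = (enorm₂ v)⁻¹ * (v ⬝ᵥ w) := by
  simp [bearingOf, smul_dotProduct]

lemma proj_quad {d : ℕ} (y v : Fin d → ℝ) :
    v ⬝ᵥ (proj y).mulVec v = v ⬝ᵥ v - (y ⬝ᵥ v) ^ 2 := by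
  simp only [proj, Matrix.sub_mulVec, Matrix.one_mulVec, dotProduct_sub]
  congr 1
  simp only [Matrix.mulVec, dotProduct, Matrix.vecMulVec_apply, sq, Finset.mul_sum,
    Finset.sum_mul]
  rw [Finset.sum_comm]
  exact Finset.sum_congr rfl fun i _ => Finset.sum_congr rfl fun j _ => by ring

lemma blk_quad {m d : ℕ} (g : Fin m → Fin d → ℝ) (y : Fin m × Fin d → ℝ) :
    y ⬝ᵥ (blkProj g).mulVec y =
      ∑ k : Fin m, (fun i => y (k, i)) ⬝ᵥ (proj (g k)).mulVec (fun i => y (k, i)) := by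
  simp only [dotProduct, Matrix.mulVec, blkProj, Matrix.of_apply, dotProduct]
  rw [Fintype.sum_prod_type]
  refine Finset.sum_congr rfl fun k _ => ?_
  refine Finset.sum_congr rfl fun i _ => ?_
  congr 1
  rw [Fintype.sum_prod_type]
  rw [Finset.sum_eq_single k]
  · simp
  · intro l _ hl; simp [Ne.symm hl]
  · simp

lemma dot_LB {m n d : ℕ} (H : Matrix (Fin m) (Fin n) ℝ) (q x : Fin n × Fin d → ℝ) :
    x ⬝ᵥ (LB H q).mulVec x =
      ∑ k : Fin m,
        edgeVec H x k ⬝ᵥ (proj (bearingOf (edgeVec H q k))).mulVec (edgeVec H x k) := by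
  have h : (LB H q).mulVec x =
      (Hbar d H)ᵀ.mulVec ((blkProj fun k => bearingOf (edgeVec H q k)).mulVec
        ((Hbar d H).mulVec x)) := by
    rw [LB, ← Matrix.mulVec_mulVec, ← Matrix.mulVec_mulVec]
  rw [h, Matrix.dotProduct_mulVec, Matrix.vecMul_transpose, blk_quad]
  rfl

lemma edgeVec_sub {m n d : ℕ} (H : Matrix (Fin m) (Fin n) ℝ)
    (p q : Fin n × Fin d → ℝ) (k : Fin m) :
    edgeVec H (p - q) k = edgeVec H p k - edgeVec H q k := by
  funext i
  simp [edgeVec, Matrix.mulVec_sub]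

lemma edge_identity {d : ℕ} (e f : Fin d → ℝ) (he : e ≠ 0) (hf : f ≠ 0) :
    (e - f) ⬝ᵥ (proj (bearingOf e)).mulVec (e - f) =
      (enorm₂ f ^ 2 / enorm₂ e ^ 2) * ((e - f) ⬝ᵥ (proj (bearingOf f)).mulVec (e - f)) := by
  have ha := dot_self_pos he
  have hb := dot_self_pos hf
  have hv : (e - f) ⬝ᵥ (e - f) = e ⬝ᵥ e - 2 * (e ⬝ᵥ f) + f ⬝ᵥ f := by
    simp [dotProduct_sub, sub_dotProduct, dotProduct_comm f e]; ring
  have h1 : e ⬝ᵥ (e - f) = e ⬝ᵥ e - e ⬝ᵥ f := by simp [dotProduct_sub]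
  have h2 : f ⬝ᵥ (e - f) = e ⬝ᵥ f - f ⬝ᵥ f := by
    simp [dotProduct_sub, dotProduct_comm f e]
  simp only [proj_quad, bearing_dot, mul_pow, inv_pow, enorm_sq, hv, h1, h2]
  have ha' : e ⬝ᵥ e ≠ 0 := ne_of_gt ha
  have hb' : f ⬝ᵥ f ≠ 0 := ne_of_gt hb
  field_simp
  ring

lemma proj_quad_nonneg {d : ℕ} {f : Fin d → ℝ} (hf : f ≠ 0) (v : Fin d → ℝ) :
    0 ≤ v ⬝ᵥ (proj (bearingOf f)).mulVec v := by
  rw [proj_quad, bearing_dot, mul_pow, inv_pow, enorm_sq, sub_nonneg]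
  have hb := dot_self_pos hf
  have hcs : (f ⬝ᵥ v) ^ 2 ≤ (f ⬝ᵥ f) * (v ⬝ᵥ v) := by
    have := Finset.sum_mul_sq_le_sq_mul_sq Finset.univ f v
    simpa [dotProduct, sq] using this
  rw [inv_mul_le_iff₀ hb]
  exact hcs

end Statement13Aux

/-- relation between the bearing Laplacian of the actual configuration
evaluated on the error `p̃ = p - p*` and the bearing Laplacian of the desired
configuration, with `γ' = min_k ‖e_k*‖²/‖e_k‖²`. -/
theorem statement_13 {d m n : ℕ} (hd : 2 ≤ d) (hm : 0 < m)
    (H : Matrix (Fin m) (Fin n) ℝ) (hH : IsIncidence H)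
    (p pstar : Fin n × Fin d → ℝ)
    (hnz : ∀ k : Fin m, edgeVec H p k ≠ 0)
    (hnzstar : ∀ k : Fin m, edgeVec H pstar k ≠ 0) :
    (p - pstar) ⬝ᵥ (LB H p).mulVec (p - pstar) =
      ∑ k : Fin m, (enorm₂ (edgeVec H pstar k) ^ 2 / enorm₂ (edgeVec H p k) ^ 2) *
        ((edgeVec H p k - edgeVec H pstar k) ⬝ᵥ
          (proj (bearingOf (edgeVec H pstar k))).mulVec
            (edgeVec H p k - edgeVec H pstar k)) ∧
    (haveI : Nonempty (Fin m) := Fin.pos_iff_nonempty.mp hm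
     Finset.univ.inf' Finset.univ_nonempty
        (fun k => enorm₂ (edgeVec H pstar k) ^ 2 / enorm₂ (edgeVec H p k) ^ 2)) *
        ((p - pstar) ⬝ᵥ (LB H pstar).mulVec (p - pstar)) ≤
      (p - pstar) ⬝ᵥ (LB H p).mulVec (p - pstar) := by
  classical
  open Statement13Aux in
  have hsub : ∀ k : Fin m, edgeVec H (p - pstar) k = edgeVec H p k - edgeVec H pstar k :=
    Statement13Aux.edgeVec_sub H p pstar
  have heq : (p - pstar) ⬝ᵥ (LB H p).mulVec (p - pstar) =
      ∑ k : Fin m, (enorm₂ (edgeVec H pstar k) ^ 2 / enorm₂ (edgeVec H p k) ^ 2) *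
        ((edgeVec H p k - edgeVec H pstar k) ⬝ᵥ
          (proj (bearingOf (edgeVec H pstar k))).mulVec
            (edgeVec H p k - edgeVec H pstar k)) := by
    rw [Statement13Aux.dot_LB]
    refine Finset.sum_congr rfl fun k _ => ?_
    rw [hsub k, Statement13Aux.edge_identity _ _ (hnz k) (hnzstar k)]
  refine ⟨heq, ?_⟩
  have heq2 : (p - pstar) ⬝ᵥ (LB H pstar).mulVec (p - pstar) =
      ∑ k : Fin m, ((edgeVec H p k - edgeVec H pstar k) ⬝ᵥ
          (proj (bearingOf (edgeVec H pstar k))).mulVec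
            (edgeVec H p k - edgeVec H pstar k)) := by
    rw [Statement13Aux.dot_LB]
    exact Finset.sum_congr rfl fun k _ => by rw [hsub k]
  rw [heq, heq2, Finset.mul_sum]
  refine Finset.sum_le_sum fun k _ => ?_
  exact mul_le_mul_of_nonneg_right (Finset.inf'_le _ (Finset.mem_univ k))
    (Statement13Aux.proj_quad_nonneg (hnzstar k) _)
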